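/- For any partition λ of length b ≥ 1 and any weight i ≥ 1, (1 - q^i)·G^i_λ(q) = G^{i+1}_{λ̄}(q) − q^{i(λ₁+1)}·G^1_{λ̄}(q), where λ̄ denotes λ with its first (largest) part removed. -/

import Mathlib

open scoped Classical
open Finset Polynomial


lemma tele (i M L : ℕ) (h : M ≤ L) :
    (1 - (X : Polynomial ℤ) ^ i) * ∑ m ∈ Finset.Icc M L, X ^ (i * m)
      = X ^ (i * M) - X ^ (i * (L + 1)) := by
  rw [← Finset.Ico_add_one_right_eq_Icc, Finset.sum_Ico_eq_sum_range]
  have h1 : ∀ m : ℕ, (X : Polynomial ℤ) ^ (i * (M + m)) = X ^ (i*M) * (X^i)^m := by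
    intro m; rw [← pow_mul, ← pow_add, Nat.mul_add]
  simp_rw [h1, ← Finset.mul_sum]
  have := geom_sum_mul ((X : Polynomial ℤ)^i) (L + 1 - M)
  have h2 : (1 - (X : Polynomial ℤ)^i) * ∑ m ∈ Finset.range (L + 1 - M), ((X:Polynomial ℤ)^i)^m
      = 1 - ((X:Polynomial ℤ)^i)^(L+1-M) := by
    have : (1 - (X : Polynomial ℤ)^i) * ∑ m ∈ Finset.range (L + 1 - M), ((X:Polynomial ℤ)^i)^m
        = -((∑ m ∈ Finset.range (L + 1 - M), ((X:Polynomial ℤ)^i)^m) * ((X:Polynomial ℤ)^i - 1)) := by ring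
    rw [this, geom_sum_mul]; ring
  rw [mul_left_comm, h2, mul_sub, mul_one, ← pow_mul, ← pow_add]
  have h3 : i * M + i * (L + 1 - M) = i * (L + 1) := by
    rw [← Nat.mul_add]; congr 1; omega
  rw [h3]

/-- `Gw b i lam` is the generating function `G^i_λ(q)` for partitions `μ` contained in
the partition `λ = (lam 0, lam 1, …, lam (b-1))`, where the first part of `μ` is given
weight `i`: each `μ` contributes `q^(i·μ₁ + μ₂ + ⋯ + μ_b)`. -/
noncomputable def Gw (b i : ℕ) (lam : ℕ → ℕ) : Polynomial ℤ :=
  ∑ mu ∈ (Fintype.piFinset fun k : Fin b => Finset.range (lam k + 1)).filter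
      (fun mu => ∀ j k : Fin b, j ≤ k → mu k ≤ mu j),
    Polynomial.X ^ (∑ k : Fin b, (if (k : ℕ) = 0 then i else 1) * mu k)

noncomputable def T (b : ℕ) (lam : ℕ → ℕ) : Finset (Fin b → ℕ) :=
  (Fintype.piFinset fun k : Fin b => Finset.range (lam (k + 1) + 1)).filter
    (fun nu => ∀ j k : Fin b, j ≤ k → nu k ≤ nu j)

lemma lemA (b' i : ℕ) (lam : ℕ → ℕ) :
    Gw (b' + 1) i lam
      = ∑ nu ∈ T b' lam, ∑ m ∈ Finset.Icc (Finset.univ.sup nu) (lam 0),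
          (X : Polynomial ℤ) ^ (i * m + ∑ k : Fin b', nu k) := by
  rw [Gw, Finset.sum_sigma']
  refine Finset.sum_nbij' (fun mu => (⟨Fin.tail mu, mu 0⟩ : Σ _ : Fin b' → ℕ, ℕ))
    (fun p => Fin.cons p.2 p.1) ?_ ?_ ?_ ?_ ?_
  · intro mu hmu
    simp only [Finset.mem_filter, Fintype.mem_piFinset, Finset.mem_range] at hmu
    obtain ⟨hmem, hanti⟩ := hmu
    simp only [Finset.mem_sigma, T, Finset.mem_filter, Fintype.mem_piFinset,
      Finset.mem_range, Finset.mem_Icc]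
    refine ⟨⟨fun k => ?_, fun j k hjk => ?_⟩, ?_, ?_⟩
    · simpa [Fin.tail, Fin.val_succ] using hmem k.succ
    · exact hanti j.succ k.succ (Fin.succ_le_succ_iff.mpr hjk)
    · exact Finset.sup_le fun k _ => hanti 0 k.succ (Fin.zero_le _)
    · exact Nat.lt_succ_iff.mp (by simpa using hmem 0)
  · rintro ⟨nu, m⟩ hp
    simp only [Finset.mem_sigma, T, Finset.mem_filter, Fintype.mem_piFinset,
      Finset.mem_range, Finset.mem_Icc] at hp
    obtain ⟨⟨hmem, hanti⟩, hm1, hm2⟩ := hp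
    simp only [Finset.mem_filter, Fintype.mem_piFinset, Finset.mem_range]
    constructor
    · intro k
      refine Fin.cases ?_ ?_ k
      · simpa using Nat.lt_succ_of_le hm2
      · intro k'
        simpa [Fin.val_succ] using hmem k'
    · intro j k hjk
      cases j using Fin.cases with
      | zero =>
        cases k using Fin.cases with
        | zero => exact le_refl _
        | succ k' =>
          simp only [Fin.cons_succ, Fin.cons_zero]
          exact le_trans (Finset.le_sup (f := nu) (Finset.mem_univ k')) hm1
      | succ j' =>
        cases k using Fin.cases with
        | zero => exact absurd hjk (not_le.mpr (Fin.succ_pos j'))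
        | succ k' =>
          simp only [Fin.cons_succ]
          exact hanti j' k' (Fin.succ_le_succ_iff.mp hjk)
  · intro mu _
    simp [Fin.cons_self_tail]
  · rintro ⟨nu, m⟩ _
    simp [Fin.tail_cons]
  · intro mu _
    congr 1
    rw [Fin.sum_univ_succ]
    simp [Fin.tail]

lemma expB (b' i : ℕ) (nu : Fin b' → ℕ) (hanti : ∀ j k : Fin b', j ≤ k → nu k ≤ nu j) :
    ∑ k : Fin b', (if (k : ℕ) = 0 then i + 1 else 1) * nu k
      = i * Finset.univ.sup nu + ∑ k : Fin b', nu k := by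
  cases b' with
  | zero => simp
  | succ c =>
    have hsup : Finset.univ.sup nu = nu 0 := by
      apply le_antisymm
      · exact Finset.sup_le fun k _ => hanti 0 k (Fin.zero_le k)
      · exact Finset.le_sup (f := nu) (Finset.mem_univ 0)
    rw [hsup, Fin.sum_univ_succ, Fin.sum_univ_succ]
    simp [Fin.val_succ, Nat.add_mul, Nat.add_assoc, Nat.add_left_comm, Nat.add_comm]

lemma lemB (b' i : ℕ) (lam : ℕ → ℕ) :
    Gw b' (i + 1) (fun k => lam (k + 1))
      = ∑ nu ∈ T b' lam,
          (X : Polynomial ℤ) ^ (i * Finset.univ.sup nu + ∑ k : Fin b', nu k) := by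
  rw [Gw]
  apply Finset.sum_congr rfl
  intro nu hnu
  rw [expB b' i nu (Finset.mem_filter.mp hnu).2]

lemma lemC (b' : ℕ) (lam : ℕ → ℕ) :
    Gw b' 1 (fun k => lam (k + 1))
      = ∑ nu ∈ T b' lam, (X : Polynomial ℤ) ^ (∑ k : Fin b', nu k) := by
  rw [Gw]
  apply Finset.sum_congr rfl
  intro nu _
  simp

/-- For a partition `λ` of length `b ≥ 1` and weight `i ≥ 1`,
`(1 - q^i)·G^i_λ(q) = G^(i+1)_{λ̄}(q) - q^(i(λ₁+1))·G^1_{λ̄}(q)`,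
where `λ̄` is `λ` with its first (largest) part removed. -/
theorem stmt1 (b i : ℕ) (hb : 1 ≤ b) (hi : 1 ≤ i) (lam : ℕ → ℕ)
    (hanti : ∀ j k, j ≤ k → k < b → lam k ≤ lam j) :
    (1 - Polynomial.X ^ i) * Gw b i lam
      = Gw (b - 1) (i + 1) (fun k => lam (k + 1))
        - Polynomial.X ^ (i * (lam 0 + 1)) * Gw (b - 1) 1 (fun k => lam (k + 1)) := by
  obtain ⟨b', rfl⟩ : ∃ b', b = b' + 1 := ⟨b - 1, (Nat.succ_pred_eq_of_pos hb).symm⟩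
  simp only [Nat.add_sub_cancel]
  rw [lemA, lemB, lemC, Finset.mul_sum, Finset.mul_sum, ← Finset.sum_sub_distrib]
  apply Finset.sum_congr rfl
  intro nu hnu
  have hsup : Finset.univ.sup nu ≤ lam 0 := by
    apply Finset.sup_le
    intro k _
    have hk : nu k ≤ lam ((k : ℕ) + 1) := by
      have := (Finset.mem_filter.mp hnu).1
      rw [Fintype.mem_piFinset] at this
      exact Nat.lt_succ_iff.mp (by simpa using this k)
    exact le_trans hk (hanti 0 ((k : ℕ) + 1) (Nat.zero_le _) (by omega))
  have key : ∀ m : ℕ, (X : Polynomial ℤ) ^ (i * m + ∑ k : Fin b', nu k)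
      = X ^ (i * m) * X ^ (∑ k : Fin b', nu k) := fun m => pow_add _ _ _
  simp_rw [key, ← Finset.sum_mul, ← mul_assoc, tele i _ _ hsup, sub_mul]
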